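/- Let f : [0, ∞) → ℝ be continuous with f(0) = x, and for a > 0 define T_D(a) = inf{t ≥ 0 : sup_{s≤t} f(s) − f(t) = a}, T_U(a) = inf{t ≥ 0 : f(t) − inf_{s≤t} f(s) = a}, and ρ(a) = inf{t ≥ 0 : sup_{s≤t} f(s) − inf_{s≤t} f(s) = a} (with inf ∅ = ∞). Then min(T_D(a), T_U(a)) = ρ(a). -/

import Mathlib

open Set ENNReal

noncomputable def DD (f : ℝ → ℝ) (t : ℝ) : ℝ := sSup (f '' Set.Icc 0 t) - f t
noncomputable def DU (f : ℝ → ℝ) (t : ℝ) : ℝ := f t - sInf (f '' Set.Icc 0 t)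
noncomputable def Rg (f : ℝ → ℝ) (t : ℝ) : ℝ := sSup (f '' Set.Icc 0 t) - sInf (f '' Set.Icc 0 t)

/-- First time the process `g` hits level `a` (over `t ≥ 0`), with value `∞` if it never does. -/
noncomputable def hitTime (g : ℝ → ℝ) (a : ℝ) : ℝ≥0∞ :=
  sInf {u : ℝ≥0∞ | ∃ t : ℝ, 0 ≤ t ∧ u = ENNReal.ofReal t ∧ g t = a}

noncomputable def Mx (f : ℝ → ℝ) (t : ℝ) : ℝ := sSup (f '' Set.Icc 0 t)
noncomputable def mn (f : ℝ → ℝ) (t : ℝ) : ℝ := sInf (f '' Set.Icc 0 t)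

section aux

variable {f : ℝ → ℝ}

lemma img_compact (hf : ContinuousOn f (Set.Ici 0)) {t : ℝ} (ht : 0 ≤ t) :
    IsCompact (f '' Set.Icc 0 t) :=
  isCompact_Icc.image_of_continuousOn (hf.mono Icc_subset_Ici_self)

lemma img_nonempty {t : ℝ} (ht : 0 ≤ t) : (f '' Set.Icc 0 t).Nonempty :=
  (nonempty_Icc.2 ht).image f

lemma le_Mx (hf : ContinuousOn f (Set.Ici 0)) {s t : ℝ} (hs : s ∈ Set.Icc 0 t) :
    f s ≤ Mx f t :=
  le_csSup (img_compact hf (hs.1.trans hs.2)).bddAbove (mem_image_of_mem f hs)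

lemma mn_le (hf : ContinuousOn f (Set.Ici 0)) {s t : ℝ} (hs : s ∈ Set.Icc 0 t) :
    mn f t ≤ f s :=
  csInf_le (img_compact hf (hs.1.trans hs.2)).bddBelow (mem_image_of_mem f hs)

lemma exists_Mx (hf : ContinuousOn f (Set.Ici 0)) {t : ℝ} (ht : 0 ≤ t) :
    ∃ s ∈ Set.Icc 0 t, f s = Mx f t := by
  obtain ⟨s, hs, h⟩ := isCompact_Icc.exists_sSup_image_eq (nonempty_Icc.2 ht)
    (hf.mono Icc_subset_Ici_self)
  exact ⟨s, hs, h.symm⟩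

lemma exists_mn (hf : ContinuousOn f (Set.Ici 0)) {t : ℝ} (ht : 0 ≤ t) :
    ∃ s ∈ Set.Icc 0 t, f s = mn f t := by
  obtain ⟨s, hs, h⟩ := isCompact_Icc.exists_sInf_image_eq (nonempty_Icc.2 ht)
    (hf.mono Icc_subset_Ici_self)
  exact ⟨s, hs, h.symm⟩

lemma Mx_mono (hf : ContinuousOn f (Set.Ici 0)) {s t : ℝ} (hs : 0 ≤ s) (hst : s ≤ t) :
    Mx f s ≤ Mx f t :=
  csSup_le_csSup (img_compact hf (hs.trans hst)).bddAbove (img_nonempty hs)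
    (image_mono (f := f) (Icc_subset_Icc_right hst))

lemma mn_anti (hf : ContinuousOn f (Set.Ici 0)) {s t : ℝ} (hs : 0 ≤ s) (hst : s ≤ t) :
    mn f t ≤ mn f s :=
  csInf_le_csInf (img_compact hf (hs.trans hst)).bddBelow (img_nonempty hs)
    (image_mono (f := f) (Icc_subset_Icc_right hst))

lemma Mx_zero : Mx f 0 = f 0 := by simp [Mx]

lemma mn_zero : mn f 0 = f 0 := by simp [mn]

lemma Mx_key (hf : ContinuousOn f (Set.Ici 0)) {t₀ ε δ : ℝ} (hε : 0 < ε)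
    (hδ : ∀ s ∈ Set.Ici (0 : ℝ), dist s t₀ < δ → dist (f s) (f t₀) < ε)
    {s t : ℝ} (hs : 0 ≤ s) (hst : s ≤ t) (hsδ : dist s t₀ < δ) (htδ : dist t t₀ < δ) :
    Mx f t ≤ Mx f s + 2 * ε := by
  obtain ⟨u, hu, hfu⟩ := exists_Mx hf (hs.trans hst)
  rcases le_or_gt u s with h | h
  · have : f u ≤ Mx f s := le_Mx hf ⟨hu.1, h⟩
    linarith
  · have huδ : dist u t₀ < δ := by
      rw [Real.dist_eq] at hsδ htδ ⊢
      rw [abs_lt] at hsδ htδ ⊢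
      constructor <;> [linarith [hu.2]; linarith [hu.2]]
    have h1 : dist (f u) (f t₀) < ε := hδ u (le_of_lt (hs.trans_lt h)) huδ
    have h2 : dist (f s) (f t₀) < ε := hδ s hs hsδ
    have h3 : f s ≤ Mx f s := le_Mx hf ⟨hs, le_refl s⟩
    rw [Real.dist_eq, abs_lt] at h1 h2
    linarith

lemma Mx_cont (hf : ContinuousOn f (Set.Ici 0)) : ContinuousOn (Mx f) (Set.Ici 0) := by
  intro t₀ ht₀
  rw [Metric.continuousWithinAt_iff]
  intro ε hε
  obtain ⟨δ, hδpos, hδ⟩ := Metric.continuousWithinAt_iff.1 (hf t₀ ht₀) (ε / 3) (by linarith)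
  refine ⟨δ, hδpos, fun t ht htδ => ?_⟩
  have ht₀δ : dist t₀ t₀ < δ := by simpa using hδpos
  have hε3 : (0 : ℝ) < ε / 3 := by linarith
  rw [Real.dist_eq, abs_lt]
  rcases le_or_gt t t₀ with h | h
  · have h1 := Mx_key hf hε3 hδ ht h htδ ht₀δ
    have h2 := Mx_mono hf ht h
    constructor <;> linarith
  · have h1 := Mx_key hf hε3 hδ ht₀ h.le ht₀δ htδ
    have h2 := Mx_mono hf ht₀ h.le
    constructor <;> linarith

lemma mn_eq_neg_Mx (t : ℝ) : mn f t = -Mx (fun x => -f x) t := by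
  have : (fun x => -f x) '' Set.Icc 0 t = -(f '' Set.Icc 0 t) := by
    ext y
    constructor
    · rintro ⟨u, hu, rfl⟩; exact ⟨u, hu, by ring⟩
    · rintro ⟨u, hu, h⟩; exact ⟨u, hu, by simp [h]⟩
  rw [mn, Mx, this, Real.sInf_def]

lemma mn_cont (hf : ContinuousOn f (Set.Ici 0)) : ContinuousOn (mn f) (Set.Ici 0) := by
  have h : ContinuousOn (fun t => -Mx (fun x => -f x) t) (Set.Ici 0) :=
    (Mx_cont hf.neg).neg
  exact h.congr fun t _ => mn_eq_neg_Mx t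

lemma Rg_cont (hf : ContinuousOn f (Set.Ici 0)) : ContinuousOn (Rg f) (Set.Ici 0) := by
  have : ContinuousOn (fun t => Mx f t - mn f t) (Set.Ici 0) := (Mx_cont hf).sub (mn_cont hf)
  exact this.congr fun t _ => rfl

lemma hitTime_le {g : ℝ → ℝ} {a t : ℝ} (ht : 0 ≤ t) (hg : g t = a) :
    hitTime g a ≤ ENNReal.ofReal t :=
  sInf_le ⟨t, ht, rfl, hg⟩

end aux

theorem stmt_1 (f : ℝ → ℝ) (x : ℝ) (hf : ContinuousOn f (Set.Ici 0)) (hx : f 0 = x)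
    (a : ℝ) (ha : 0 < a) :
    min (hitTime (DD f) a) (hitTime (DU f) a) = hitTime (Rg f) a := by
  have hRg0 : Rg f 0 = 0 := by
    show Mx f 0 - mn f 0 = 0
    rw [Mx_zero, mn_zero, sub_self]
  -- If Rg reaches a at some nonneg time, then hitTime Rg ≤ that time (via IVT)
  have key : ∀ t : ℝ, 0 ≤ t → a ≤ Rg f t → hitTime (Rg f) a ≤ ENNReal.ofReal t := by
    intro t ht hat
    have hcont : ContinuousOn (Rg f) (Set.Icc 0 t) := (Rg_cont hf).mono Icc_subset_Ici_self
    have := intermediate_value_Icc ht hcont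
    have hmem : a ∈ Set.Icc (Rg f 0) (Rg f t) := ⟨by rw [hRg0]; exact ha.le, hat⟩
    obtain ⟨s, hs, hsa⟩ := this hmem
    exact (hitTime_le hs.1 hsa).trans (ENNReal.ofReal_le_ofReal hs.2)
  apply le_antisymm
  · -- min ≤ hitTime Rg
    set S : Set ℝ := {t : ℝ | 0 ≤ t ∧ Rg f t = a} with hS
    rcases S.eq_empty_or_nonempty with hSe | hSne
    · have htop : hitTime (Rg f) a = ⊤ := by
        have he : {u : ℝ≥0∞ | ∃ t : ℝ, 0 ≤ t ∧ u = ENNReal.ofReal t ∧ Rg f t = a} = ∅ := by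
          ext u
          simp only [Set.mem_setOf_eq, Set.mem_empty_iff_false, iff_false]
          rintro ⟨t, ht, -, hrt⟩
          exact Set.eq_empty_iff_forall_notMem.1 hSe t ⟨ht, hrt⟩
        rw [hitTime, he, sInf_empty]
      rw [htop]
      exact le_top
    · have hSclosed : IsClosed S := by
        have : S = Set.Ici 0 ∩ Rg f ⁻¹' {a} := by
          ext t; simp only [hS, Set.mem_setOf_eq, Set.mem_inter_iff, Set.mem_Ici,
            Set.mem_preimage, Set.mem_singleton_iff]
        rw [this]
        exact (Rg_cont hf).preimage_isClosed_of_isClosed isClosed_Ici isClosed_singleton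
      have hSbdd : BddBelow S := ⟨0, fun t ht => ht.1⟩
      set ρ := sInf S with hρdef
      have hρS : ρ ∈ S := hSclosed.csInf_mem hSne hSbdd
      obtain ⟨hρ0, hρa⟩ := hρS
      have hρa' : Mx f ρ - mn f ρ = a := hρa
      -- at time ρ, f ρ is either the running max or the running min
      have hkey : f ρ = Mx f ρ ∨ f ρ = mn f ρ := by
        by_contra hcon
        push_neg at hcon
        obtain ⟨hne1, hne2⟩ := hcon
        obtain ⟨s₀, hs₀, hfs₀⟩ := exists_Mx hf hρ0
        obtain ⟨s₁, hs₁, hfs₁⟩ := exists_mn hf hρ0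
        have hs₀lt : s₀ < ρ := by
          rcases lt_or_eq_of_le hs₀.2 with h | h
          · exact h
          · exact absurd (h ▸ hfs₀) hne1
        have hs₁lt : s₁ < ρ := by
          rcases lt_or_eq_of_le hs₁.2 with h | h
          · exact h
          · exact absurd (h ▸ hfs₁) hne2
        set t := max s₀ s₁ with htdef
        have ht0 : 0 ≤ t := le_trans hs₀.1 (le_max_left _ _)
        have htρ : t < ρ := max_lt hs₀lt hs₁lt
        have h1 : Mx f ρ ≤ Mx f t := by
          rw [← hfs₀]
          exact le_Mx hf ⟨hs₀.1, le_max_left _ _⟩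
        have h2 : mn f t ≤ mn f ρ := by
          rw [← hfs₁]
          exact mn_le hf ⟨hs₁.1, le_max_right _ _⟩
        have h3 : Mx f t ≤ Mx f ρ := Mx_mono hf ht0 htρ.le
        have h4 : mn f ρ ≤ mn f t := mn_anti hf ht0 htρ.le
        have htS : t ∈ S := ⟨ht0, by show Mx f t - mn f t = a; linarith⟩
        exact absurd (csInf_le hSbdd htS) (not_le.2 htρ)
      -- hitTime Rg = ofReal ρ from below
      have hge : ENNReal.ofReal ρ ≤ hitTime (Rg f) a := by
        apply le_sInf
        rintro u ⟨t, ht, rfl, hrt⟩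
        exact ENNReal.ofReal_le_ofReal (csInf_le hSbdd ⟨ht, hrt⟩)
      rcases hkey with h | h
      · -- f ρ = Mx f ρ, so DU f ρ = a
        have : DU f ρ = a := by show f ρ - mn f ρ = a; rw [h]; exact hρa'
        calc min (hitTime (DD f) a) (hitTime (DU f) a) ≤ hitTime (DU f) a := min_le_right _ _
          _ ≤ ENNReal.ofReal ρ := hitTime_le hρ0 this
          _ ≤ hitTime (Rg f) a := hge
      · -- f ρ = mn f ρ, so DD f ρ = a
        have : DD f ρ = a := by show Mx f ρ - f ρ = a; rw [h]; exact hρa'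
        calc min (hitTime (DD f) a) (hitTime (DU f) a) ≤ hitTime (DD f) a := min_le_left _ _
          _ ≤ ENNReal.ofReal ρ := hitTime_le hρ0 this
          _ ≤ hitTime (Rg f) a := hge
  · -- hitTime Rg ≤ min
    apply le_min
    · apply le_sInf
      rintro u ⟨t, ht, rfl, hdt⟩
      have hdt' : Mx f t - f t = a := hdt
      have h1 : mn f t ≤ f t := mn_le hf ⟨ht, le_refl t⟩
      exact key t ht (by show a ≤ Mx f t - mn f t; linarith)
    · apply le_sInf
      rintro u ⟨t, ht, rfl, hdt⟩
      have hdt' : f t - mn f t = a := hdt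
      have h1 : f t ≤ Mx f t := le_Mx hf ⟨ht, le_refl t⟩
      exact key t ht (by show a ≤ Mx f t - mn f t; linarith)
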